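/- For all d, l ∈ ℕ there exists R ∈ ℕ such that for every function C : {l, …, R}² → ℕ^{d+2} satisfying max-coordinate of C(x, y) ≤ max {x, y} for all x, y ∈ {l, …, R}, there exist a < b < c in {l, …, R} with C(a, b) ≤ C(b, c) coordinatewise. -/

import Mathlib

open Set Classical

/-- Pigeonhole: an infinite set of naturals colored by a finite type has an infinite fiber. -/
lemma infinite_fiber {β : Type*} [Finite β] {s : Set ℕ} (hs : s.Infinite) (g : ℕ → β) :
    ∃ e, {n | n ∈ s ∧ g n = e}.Infinite := by
  by_contra h
  push_neg at h
  have hsub : s ⊆ ⋃ e : β, {n | n ∈ s ∧ g n = e} := fun n hn => Set.mem_iUnion.2 ⟨g n, hn, rfl⟩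
  exact hs ((Set.finite_iUnion fun e => (h e)).subset hsub)

lemma infinite_above {s : Set ℕ} (hs : s.Infinite) (a : ℕ) :
    {m | m ∈ s ∧ a < m}.Infinite := by
  have : {m | m ∈ s ∧ a < m} = s \ Set.Iic a := by
    ext m; simp [Set.mem_diff, not_le, and_comm]
  rw [this]
  exact hs.diff (Set.finite_Iic a)

section Ramsey

variable {β : Type*} [Finite β] [Nonempty β]

/-- one refinement step for the pairs construction -/
lemma pstep_ex (g : ℕ → ℕ → β) (S : Set ℕ) (hS : S.Infinite) :
    ∃ T : Set ℕ, T.Infinite ∧ T ⊆ S ∧ (∀ m ∈ T, sInf S < m) ∧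
      ∃ e, ∀ m ∈ T, g (sInf S) m = e := by
  obtain ⟨e, he⟩ := infinite_fiber (infinite_above hS (sInf S)) (g (sInf S))
  refine ⟨_, he, ?_, ?_, e, ?_⟩
  · intro m hm; exact hm.1.1
  · intro m hm; exact hm.1.2
  · intro m hm; exact hm.2

/-- Infinite Ramsey theorem for pairs with finitely many colors, sequence form. -/
theorem ramsey_pairs (g : ℕ → ℕ → β) :
    ∃ x : ℕ → ℕ, StrictMono x ∧ ∃ e, ∀ i j, i < j → g (x i) (x j) = e := by
  classical
  let step : {S : Set ℕ // S.Infinite} → {S : Set ℕ // S.Infinite} := fun S =>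
    ⟨(pstep_ex g S.1 S.2).choose, (pstep_ex g S.1 S.2).choose_spec.1⟩
  let F : ℕ → {S : Set ℕ // S.Infinite} := fun n => step^[n] ⟨Set.univ, Set.infinite_univ⟩
  have hFsucc : ∀ n, F (n + 1) = step (F n) := fun n =>
    Function.iterate_succ_apply' step n _
  set a : ℕ → ℕ := fun n => sInf (F n).1 with ha
  have hamem : ∀ n, a n ∈ (F n).1 := fun n => Nat.sInf_mem (F n).2.nonempty
  have hsub : ∀ n, (F (n + 1)).1 ⊆ (F n).1 := by
    intro n m hm
    rw [hFsucc n] at hm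
    exact (pstep_ex g (F n).1 (F n).2).choose_spec.2.1 hm
  have hgt : ∀ n, ∀ m ∈ (F (n + 1)).1, a n < m := by
    intro n m hm
    rw [hFsucc n] at hm
    exact (pstep_ex g (F n).1 (F n).2).choose_spec.2.2.1 m hm
  have hcol : ∀ n, ∃ e, ∀ m ∈ (F (n + 1)).1, g (a n) m = e := by
    intro n
    obtain ⟨e, he⟩ := (pstep_ex g (F n).1 (F n).2).choose_spec.2.2.2
    exact ⟨e, fun m hm => he m (by rwa [hFsucc n] at hm)⟩
  have hmono : ∀ j k, j ≤ k → (F k).1 ⊆ (F j).1 := by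
    intro j k hjk
    induction k with
    | zero => simp_all
    | succ k ih =>
      rcases Nat.lt_or_ge j (k + 1) with h | h
      · exact (hsub k).trans (ih (Nat.lt_succ_iff.mp h))
      · have : j = k + 1 := le_antisymm hjk h
        subst this; exact fun _ h => h
  have hchain : ∀ j k, j < k → a k ∈ (F (j + 1)).1 :=
    fun j k hjk => hmono (j + 1) k hjk (hamem k)
  have hamono : StrictMono a :=
    strictMono_nat_of_lt_succ fun n => hgt n _ (hchain n (n + 1) (Nat.lt_succ_self n))
  set c : ℕ → β := fun n => (hcol n).choose with hc
  have hcspec : ∀ i j, i < j → g (a i) (a j) = c i :=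
    fun i j hij => (hcol i).choose_spec _ (hchain i j hij)
  obtain ⟨e, he⟩ := infinite_fiber (Set.infinite_univ (α := ℕ)) c
  have he' : {n | c n = e}.Infinite := by
    have : {n | n ∈ Set.univ ∧ c n = e} = {n | c n = e} := by ext; simp
    rwa [this] at he
  refine ⟨fun i => a (Nat.nth (fun n => c n = e) i),
    hamono.comp (Nat.nth_strictMono he'), e, fun i j hij => ?_⟩
  rw [hcspec _ _ (hamono.lt_iff_lt.mp (hamono ((Nat.nth_strictMono he') hij)))]
  · exact Nat.nth_mem_of_infinite he' i
  -- the rewrite above needs the inequality on nth; restate cleanly below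

/-- one refinement step for the triples construction -/
lemma tstep_ex (g : ℕ → ℕ → ℕ → β) (h : ℕ → ℕ) (n : ℕ) (S : Set ℕ) (hS : S.Infinite) :
    ∃ T : Set ℕ, T.Infinite ∧ T ⊆ S ∧ (∀ m ∈ T, sInf S < m) ∧
      ∃ φ : Fin n → β, ∀ m ∈ T, ∀ j : Fin n, g (h j) (sInf S) m = φ j := by
  obtain ⟨φ, hφ⟩ := infinite_fiber (infinite_above hS (sInf S))
    (fun m => (fun j : Fin n => g (h j) (sInf S) m))
  refine ⟨_, hφ, ?_, ?_, φ, ?_⟩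
  · intro m hm; exact hm.1.1
  · intro m hm; exact hm.1.2
  · intro m hm j; exact congrFun hm.2 j

/-- The recursive refinement for the triples construction. -/
noncomputable def tF (g : ℕ → ℕ → ℕ → β) : ℕ → (ℕ → ℕ) × {S : Set ℕ // S.Infinite}
  | 0 => (fun _ => 0, ⟨Set.univ, Set.infinite_univ⟩)
  | n + 1 =>
      (Function.update (tF g n).1 n (sInf (tF g n).2.1),
       ⟨(tstep_ex g (tF g n).1 n (tF g n).2.1 (tF g n).2.2).choose,
        (tstep_ex g (tF g n).1 n (tF g n).2.1 (tF g n).2.2).choose_spec.1⟩)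

/-- Infinite Ramsey theorem for triples with finitely many colors, sequence form. -/
theorem ramsey_triples (g : ℕ → ℕ → ℕ → β) :
    ∃ x : ℕ → ℕ, StrictMono x ∧ ∃ e, ∀ i j k, i < j → j < k →
      g (x i) (x j) (x k) = e := by
  classical
  set F : ℕ → (ℕ → ℕ) × {S : Set ℕ // S.Infinite} := tF g with hF
  have hFsucc : ∀ n, F (n + 1) = (Function.update (F n).1 n (sInf (F n).2.1),
      ⟨(tstep_ex g (F n).1 n (F n).2.1 (F n).2.2).choose,
       (tstep_ex g (F n).1 n (F n).2.1 (F n).2.2).choose_spec.1⟩) := fun n => by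
    rw [hF]; rfl
  set a : ℕ → ℕ := fun n => sInf (F n).2.1 with ha
  have hamem : ∀ n, a n ∈ (F n).2.1 := fun n => Nat.sInf_mem (F n).2.2.nonempty
  have hsub : ∀ n, (F (n + 1)).2.1 ⊆ (F n).2.1 := by
    intro n m hm
    rw [hFsucc n] at hm
    exact (tstep_ex g (F n).1 n (F n).2.1 (F n).2.2).choose_spec.2.1 hm
  have hgt : ∀ n, ∀ m ∈ (F (n + 1)).2.1, a n < m := by
    intro n m hm
    rw [hFsucc n] at hm
    exact (tstep_ex g (F n).1 n (F n).2.1 (F n).2.2).choose_spec.2.2.1 m hm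
  have hhist : ∀ n j, j < n → (F n).1 j = a j := by
    intro n
    induction n with
    | zero => omega
    | succ n ih =>
      intro j hj
      rw [hFsucc n]
      rcases Nat.lt_or_ge j n with h | h
      · show Function.update (F n).1 n (sInf (F n).2.1) j = a j
        rw [Function.update_of_ne (by omega)]
        exact ih j h
      · have : j = n := by omega
        subst this
        show Function.update (F j).1 j (sInf (F j).2.1) j = a j
        rw [Function.update_self]
  have hcol : ∀ n, ∃ φ : Fin n → β, ∀ m ∈ (F (n + 1)).2.1, ∀ j : Fin n,
      g (a j) (a n) m = φ j := by
    intro n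
    obtain ⟨φ, hφ⟩ := (tstep_ex g (F n).1 n (F n).2.1 (F n).2.2).choose_spec.2.2.2
    refine ⟨φ, fun m hm j => ?_⟩
    have := hφ m (by rwa [hFsucc n] at hm) j
    rwa [hhist n j j.2] at this
  have hmono : ∀ j k, j ≤ k → (F k).2.1 ⊆ (F j).2.1 := by
    intro j k hjk
    induction k with
    | zero =>
      have : j = 0 := Nat.le_zero.mp hjk
      subst this; exact fun _ h => h
    | succ k ih =>
      rcases Nat.lt_or_ge j (k + 1) with h | h
      · exact (hsub k).trans (ih (Nat.lt_succ_iff.mp h))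
      · have : j = k + 1 := le_antisymm hjk h
        subst this; exact fun _ h => h
  have hchain : ∀ j k, j < k → a k ∈ (F (j + 1)).2.1 :=
    fun j k hjk => hmono (j + 1) k hjk (hamem k)
  have hamono : StrictMono a :=
    strictMono_nat_of_lt_succ fun n => hgt n _ (hchain n (n + 1) (Nat.lt_succ_self n))
  set c : ℕ → ℕ → β := fun i j =>
    if hij : i < j then (hcol j).choose ⟨i, hij⟩ else Classical.arbitrary β with hc
  have hcspec : ∀ i j k, i < j → j < k → g (a i) (a j) (a k) = c i j := by
    intro i j k hij hjk
    have := (hcol j).choose_spec (a k) (hchain j k hjk) ⟨i, hij⟩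
    rw [this, hc]
    simp only [dif_pos hij]
  obtain ⟨y, hy, e, hye⟩ := ramsey_pairs c
  refine ⟨fun i => a (y i), hamono.comp hy, e, fun i j k hij hjk => ?_⟩
  rw [hcspec (y i) (y j) (y k) (hy hij) (hy hjk)]
  exact hye i j hij

end Ramsey

/-- Infinite adjacent Ramsey theorem for pairs. -/
theorem adjacentRamsey_infinite (d : ℕ) (f : ℕ → ℕ → (Fin (d + 2) → ℕ)) :
    ∃ a b c : ℕ, a < b ∧ b < c ∧ f a b ≤ f b c := by
  by_contra h
  push_neg at h
  -- for a<b<c pick a coordinate that strictly decreases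
  have hcoord : ∀ a b c, a < b → b < c → ∃ k, f b c k < f a b k := by
    intro a b c hab hbc
    have := h a b c hab hbc
    rw [Pi.le_def] at this
    push_neg at this
    obtain ⟨k, hk⟩ := this
    exact ⟨k, hk⟩
  classical
  let g : ℕ → ℕ → ℕ → Fin (d + 2) := fun a b c =>
    if hc : a < b ∧ b < c then (hcoord a b c hc.1 hc.2).choose else 0
  have hg : ∀ a b c, a < b → b < c → f b c (g a b c) < f a b (g a b c) := by
    intro a b c hab hbc
    have : g a b c = (hcoord a b c hab hbc).choose := by
      simp only [g, dif_pos (And.intro hab hbc)]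
    rw [this]
    exact (hcoord a b c hab hbc).choose_spec
  obtain ⟨x, hx, e, he⟩ := ramsey_triples g
  -- descending chain
  set v : ℕ → ℕ := fun i => f (x i) (x (i + 1)) e with hv
  have hdesc : ∀ i, v (i + 1) < v i := by
    intro i
    have h1 : x i < x (i + 1) := hx (Nat.lt_succ_self i)
    have h2 : x (i + 1) < x (i + 2) := hx (Nat.lt_succ_self (i + 1))
    have hge := he i (i + 1) (i + 2) (Nat.lt_succ_self i) (Nat.lt_succ_self (i + 1))
    have := hg (x i) (x (i + 1)) (x (i + 2)) h1 h2
    rwa [hge] at this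
  have hbound : ∀ n, v n + n ≤ v 0 := by
    intro n
    induction n with
    | zero => simp
    | succ n ih => have := hdesc n; omega
  have := hbound (v 0 + 1)
  omega

/-- Finite adjacent Ramsey theorem for pairs with codimension `d+2` and diagonal bound:
for all `d, l` there is `R` such that every `C : {l, …, R}² → ℕ^{d+2}` with
`max (C x y) ≤ max x y` admits `a < b < c` in `{l, …, R}` with `C a b ≤ C b c`. -/
theorem finiteAdjacentRamsey_pairs (d l : ℕ) :
    ∃ R : ℕ, ∀ C : ℕ → ℕ → (Fin (d + 2) → ℕ),
      (∀ x y, l ≤ x → x ≤ R → l ≤ y → y ≤ R → ∀ k, C x y k ≤ max x y) →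
      ∃ a b c, l ≤ a ∧ a < b ∧ b < c ∧ c ≤ R ∧ C a b ≤ C b c := by
  by_contra hcon
  push_neg at hcon
  classical
  -- for each R a "bad" coloring
  choose Cf hbound hbad using hcon
  -- compactness via a nonprincipal ultrafilter
  let U : Ultrafilter ℕ := Filter.hyperfilter ℕ
  -- for each pair (a, b) find a value attained U-often
  have key : ∀ a b : ℕ, ∃ v : Fin (d + 2) → ℕ,
      {R | max (a + l) (b + l) ≤ R ∧ Cf R (a + l) (b + l) = v} ∈ U := by
    intro a b
    set M := max (a + l) (b + l) with hM
    have hsmem : {R | M ≤ R} ∈ U := by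
      apply Filter.mem_hyperfilter_of_finite_compl
      have : {R | M ≤ R}ᶜ = Set.Iio M := by ext R; simp [not_le]
      rw [this]; exact Set.finite_Iio M
    -- the values lie in a finite set
    have hfin : ({v : Fin (d + 2) → ℕ | ∀ k, v k ∈ Set.Iic M}).Finite :=
      Set.Finite.pi' (fun _ => Set.finite_Iic M)
    have hcover : {R | M ≤ R} ⊆
        ⋃ v ∈ {v : Fin (d + 2) → ℕ | ∀ k, v k ∈ Set.Iic M},
          {R | M ≤ R ∧ Cf R (a + l) (b + l) = v} := by
      intro R hR
      refine Set.mem_biUnion ?_ ⟨hR, rfl⟩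
      intro k
      exact hbound R (a + l) (b + l) (by omega) (le_trans (le_max_left _ _) hR)
        (by omega) (le_trans (le_max_right _ _) hR) k
    have hunion : (⋃ v ∈ {v : Fin (d + 2) → ℕ | ∀ k, v k ∈ Set.Iic M},
        {R | M ≤ R ∧ Cf R (a + l) (b + l) = v}) ∈ U :=
      Filter.mem_of_superset hsmem hcover
    obtain ⟨v, _, hv⟩ := (Ultrafilter.finite_biUnion_mem_iff hfin).mp hunion
    exact ⟨v, hv⟩
  choose f hf using key
  obtain ⟨a, b, c, hab, hbc, hle⟩ := adjacentRamsey_infinite d f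
  -- find a single R witnessing both values
  have hmem : {R | max (a + l) (b + l) ≤ R ∧ Cf R (a + l) (b + l) = f a b} ∩
      {R | max (b + l) (c + l) ≤ R ∧ Cf R (b + l) (c + l) = f b c} ∈ U :=
    Filter.inter_mem (hf a b) (hf b c)
  obtain ⟨R, hR1, hR2⟩ := Ultrafilter.nonempty_of_mem hmem
  have := hbad R (a + l) (b + l) (c + l) (by omega) (by omega) (by omega)
    (le_trans (le_max_right _ _) hR2.1)
  rw [hR1.2, hR2.2] at this
  exact this hle
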